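/- Let F be a string with smallest period p, and fix two starting positions q ∈ [1, p] and ending position q' ∈ [|F| - p + 1, |F|]. The set of squares induced by F that have an occurrence starting at position q equals the set of squares induced by F that have an occurrence ending at position q' if q ≡ q' + 1 (mod p), and the two sets are disjoint otherwise. -/

import Mathlib

/-- `p` is a period of the string (list) `S`. -/
def IsPeriod {α : Type*} (S : List α) (p : ℕ) : Prop :=
  0 < p ∧ ∀ i, i + p < S.length → S[i]? = S[i + p]?

/-- The smallest period of `S`. -/
noncomputable def minPeriod {α : Type*} (S : List α) : ℕ :=
  sInf {p | IsPeriod S p}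

/-- `P` occurs in `S` at (0-indexed) position `i`. -/
def OccursAt {α : Type*} (P S : List α) (i : ℕ) : Prop :=
  (S.drop i).take P.length = P ∧ i + P.length ≤ S.length

/-- The fragment `T[a..b]` (0-indexed, inclusive). -/
def frag {α : Type*} (T : List α) (a b : ℕ) : List α :=
  (T.drop a).take (b + 1 - a)

/-- `T[a..b]` is a run (maximal periodic fragment) of `T`. -/
def IsRun {α : Type*} (T : List α) (a b : ℕ) : Prop :=
  a ≤ b ∧ b < T.length ∧
  2 * minPeriod (frag T a b) ≤ b + 1 - a ∧
  (a = 0 ∨ T[a - 1]? ≠ T[a - 1 + minPeriod (frag T a b)]?) ∧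
  (b + 1 = T.length ∨ T[b + 1]? ≠ T[b + 1 - minPeriod (frag T a b)]?)

/-- The occurrence of the square `U · U` at position `s` of `T` is induced by the run `T[a..b]`. -/
def InducedOcc {α : Type*} (T U : List α) (s a b : ℕ) : Prop :=
  U ≠ [] ∧ IsRun T a b ∧ OccursAt (U ++ U) T s ∧ a ≤ s ∧
  s + 2 * U.length ≤ b + 1 ∧ minPeriod U = minPeriod (frag T a b)

/-- The `k`-th power `V^k` of a string `V`. -/
def listPow {α : Type*} (V : List α) (k : ℕ) : List α :=
  (List.replicate k V).flatten

private lemma minPeriod_isPeriod {α : Type*} (S : List α) : IsPeriod S (minPeriod S) :=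
  Nat.sInf_mem (⟨S.length + 1, show IsPeriod S (S.length + 1) from
    ⟨Nat.succ_pos _, fun _ h => absurd h (by omega)⟩⟩ : Set.Nonempty {p | IsPeriod S p})

private lemma minPeriod_le {α : Type*} {S : List α} {r : ℕ} (h : IsPeriod S r) :
    minPeriod S ≤ r :=
  Nat.sInf_le h

private lemma minPeriod_le_length {α : Type*} {S : List α} (h : S ≠ []) :
    minPeriod S ≤ S.length :=
  minPeriod_le ⟨List.length_pos_iff.2 h, fun _ hi => absurd hi (by omega)⟩

private lemma occ_get {α : Type*} {P S : List α} {s : ℕ} (h : OccursAt P S s) :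
    ∀ i < P.length, P[i]? = S[s + i]? := by
  intro i hi
  conv_lhs => rw [← h.1]
  rw [List.getElem?_take, if_pos hi, List.getElem?_drop]

private lemma occ_intro {α : Type*} {P S : List α} {s : ℕ} (hlen : s + P.length ≤ S.length)
    (h : ∀ i < P.length, S[s + i]? = P[i]?) : OccursAt P S s := by
  refine ⟨List.ext_getElem? fun i => ?_, hlen⟩
  rw [List.getElem?_take, List.getElem?_drop]
  by_cases hi : i < P.length
  · rw [if_pos hi]; exact h i hi
  · rw [if_neg hi]
    exact (List.getElem?_eq_none (le_of_not_gt hi)).symm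

private lemma period_get {α : Type*} {S : List α} {p : ℕ} (hp : IsPeriod S p) :
    ∀ j, j < S.length → S[j]? = S[j % p]? := by
  intro j
  induction j using Nat.strong_induction_on with
  | _ j ih =>
    intro hj
    rcases lt_or_ge j p with h | h
    · rw [Nat.mod_eq_of_lt h]
    · have hp0 := hp.1
      rw [Nat.mod_eq_sub_mod h, ← ih (j - p) (by omega) (by omega)]
      have h2 := hp.2 (j - p) (by omega)
      rw [show j - p + p = j from by omega] at h2
      exact h2.symm

private lemma period_get2 {α : Type*} {S : List α} {p : ℕ} (hp : IsPeriod S p)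
    {j j' : ℕ} (hm : j % p = j' % p) (hj : j < S.length) (hj' : j' < S.length) :
    S[j]? = S[j']? := by
  rw [period_get hp j hj, period_get hp j' hj', hm]

private lemma occ_shift {α : Type*} {P S : List α} {p s s' : ℕ} (hp : IsPeriod S p)
    (h : OccursAt P S s) (hm : s % p = s' % p) (hb : s' + P.length ≤ S.length) :
    OccursAt P S s' := by
  refine occ_intro hb fun i hi => ?_
  rw [occ_get h i hi]
  have hmm : (s' + i) % p = (s + i) % p :=
    Nat.ModEq.add_right i (hm.symm : Nat.ModEq p s' s)
  exact period_get2 hp hmm (by omega) (by have := h.2; omega)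

private lemma fine_wilf {β : Type*} :
    ∀ (m : ℕ) (f : ℕ → β) (a b n : ℕ), a + b = m → 0 < a → 0 < b → a + b ≤ n →
    (∀ i, i + a < n → f i = f (i + a)) →
    (∀ i, i + b < n → f i = f (i + b)) →
    ∀ i, i + Nat.gcd a b < n → f i = f (i + Nat.gcd a b) := by
  intro m
  induction m using Nat.strong_induction_on with
  | _ m ih =>
    intro f a b n hm ha hb hn hfa hfb
    rcases Nat.lt_trichotomy a b with h | h | h
    · -- a < b
      have hba : ∀ i, i + (b - a) < n → f i = f (i + (b - a)) := by
        intro i hi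
        rcases lt_or_ge (i + b) n with h2 | h2
        · rw [hfb i h2]
          have h3 := hfa (i + (b - a)) (by omega)
          rw [show i + (b - a) + a = i + b from by omega] at h3
          exact h3.symm
        · have h3 := hfa (i - a) (by omega)
          rw [show i - a + a = i from by omega] at h3
          have h4 := hfb (i - a) (by omega)
          rw [show i - a + b = i + (b - a) from by omega] at h4
          rw [← h3, h4]
      have hg : Nat.gcd a (b - a) = Nat.gcd a b := Nat.gcd_sub_self_right (le_of_lt h)
      have h5 := ih b (by omega) f a (b - a) n (by omega) ha (by omega) (by omega) hfa hba
      rwa [hg] at h5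
    · subst h
      rw [Nat.gcd_self]
      exact hfa
    · -- b < a
      have hab : ∀ i, i + (a - b) < n → f i = f (i + (a - b)) := by
        intro i hi
        rcases lt_or_ge (i + a) n with h2 | h2
        · rw [hfa i h2]
          have h3 := hfb (i + (a - b)) (by omega)
          rw [show i + (a - b) + b = i + a from by omega] at h3
          exact h3.symm
        · have h3 := hfb (i - b) (by omega)
          rw [show i - b + b = i from by omega] at h3
          have h4 := hfa (i - b) (by omega)
          rw [show i - b + a = i + (a - b) from by omega] at h4
          rw [← h3, h4]
      have hg : Nat.gcd b (a - b) = Nat.gcd b a := Nat.gcd_sub_self_right (le_of_lt h)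
      have h5 := ih a (by omega) f b (a - b) n (by omega) hb (by omega) (by omega) hfb hab
      rwa [hg, Nat.gcd_comm] at h5

private lemma root_dvd {α : Type*} {F U : List α} {s : ℕ}
    (hU : U ≠ []) (hocc : OccursAt (U ++ U) F s)
    (hmp : minPeriod U = minPeriod F) : minPeriod F ∣ U.length := by
  have hpF := minPeriod_isPeriod F
  set p := minPeriod F with hp
  have hp0 : 0 < p := hpF.1
  set L := U.length with hLdef
  have hL : 0 < L := List.length_pos_iff.2 hU
  have hpL : p ≤ L := by have := minPeriod_le_length hU; rwa [hmp] at this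
  have hlenUU : (U ++ U).length = L + L := by simp [hLdef]
  have hget := occ_get hocc
  rw [hlenUU] at hget
  have hb2 : s + (L + L) ≤ F.length := by have := hocc.2; omega
  have h1 : ∀ i, i + p < L + L → (U ++ U)[i]? = (U ++ U)[i + p]? := by
    intro i hi
    rw [hget i (by omega), hget (i + p) (by omega), ← Nat.add_assoc]
    exact hpF.2 (s + i) (by omega)
  have h2 : ∀ i, i + L < L + L → (U ++ U)[i]? = (U ++ U)[i + L]? := by
    intro i hi
    rw [List.getElem?_append_left (show i < U.length from by omega),
      List.getElem?_append_right (show U.length ≤ i + L from by omega)]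
    congr 1
    omega
  have h3 := fine_wilf (p + L) (fun i => (U ++ U)[i]?) p L (L + L) rfl hp0 hL (by omega) h1 h2
  have hgle : Nat.gcd p L ≤ p := Nat.gcd_le_left L hp0
  have hUper : IsPeriod U (Nat.gcd p L) := by
    refine ⟨Nat.gcd_pos_of_pos_left L hp0, fun i hi => ?_⟩
    have e1 : (U ++ U)[i]? = U[i]? := List.getElem?_append_left (by omega)
    have e2 : (U ++ U)[i + Nat.gcd p L]? = U[i + Nat.gcd p L]? :=
      List.getElem?_append_left (by omega)
    rw [← e1, ← e2]
    exact h3 i (by omega)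
  have h4 := minPeriod_le hUper
  rw [hmp] at h4
  have h5 : Nat.gcd p L = p := le_antisymm hgle h4
  exact h5 ▸ Nat.gcd_dvd_right p L

private lemma occ_cong_aux {α : Type*} {F U : List α} {s1 s2 : ℕ}
    (hU : U ≠ []) (h1 : OccursAt (U ++ U) F s1) (h2 : OccursAt (U ++ U) F s2)
    (hmp : minPeriod U = minPeriod F) (hle : s1 ≤ s2) :
    minPeriod F ∣ (s2 - s1) := by
  have hpF := minPeriod_isPeriod F
  set p := minPeriod F with hp
  have hp0 : 0 < p := hpF.1
  set L := U.length with hLdef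
  have hL : 0 < L := List.length_pos_iff.2 hU
  have hpL : p ≤ L := by have := minPeriod_le_length hU; rwa [hmp] at this
  have hlenUU : (U ++ U).length = L + L := by simp [hLdef]
  rcases Nat.eq_or_lt_of_le hle with he | hlt
  · rw [← he]
    simp
  set d := s2 - s1 with hd
  have hd0 : 0 < d := by omega
  have hget1 := occ_get h1
  have hget2 := occ_get h2
  rw [hlenUU] at hget1 hget2
  have hb1 : s1 + (L + L) ≤ F.length := by have := h1.2; omega
  have hb2 : s2 + (L + L) ≤ F.length := by have := h2.2; omega
  set f : ℕ → Option α := fun i => F[s1 + i]? with hf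
  set n := d + (L + L) with hn
  have hfa : ∀ i, i + d < n → f i = f (i + d) := by
    intro i hi
    have hiL : i < L + L := by omega
    simp only [hf]
    rw [← hget1 i hiL, show s1 + (i + d) = s2 + i from by omega, ← hget2 i hiL]
  have hfb : ∀ i, i + p < n → f i = f (i + p) := by
    intro i hi
    simp only [hf]
    rw [← Nat.add_assoc]
    exact hpF.2 (s1 + i) (by omega)
  have h3 := fine_wilf (d + p) f d p n rfl hd0 hp0 (by omega) hfa hfb
  have hgle : Nat.gcd d p ≤ p := Nat.gcd_le_right _ hp0
  have hUper : IsPeriod U (Nat.gcd d p) := by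
    refine ⟨Nat.gcd_pos_of_pos_right d hp0, fun i hi => ?_⟩
    have e1 : U[i]? = (U ++ U)[i]? := (List.getElem?_append_left (by omega)).symm
    have e2 : U[i + Nat.gcd d p]? = (U ++ U)[i + Nat.gcd d p]? :=
      (List.getElem?_append_left (by omega)).symm
    rw [e1, e2, hget1 i (by omega), hget1 (i + Nat.gcd d p) (by omega)]
    exact h3 i (by omega)
  have h4 := minPeriod_le hUper
  rw [hmp] at h4
  have h5 : Nat.gcd d p = p := le_antisymm hgle h4
  exact h5 ▸ Nat.gcd_dvd_left d p

private lemma occ_cong {α : Type*} {F U : List α} {s1 s2 : ℕ}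
    (hU : U ≠ []) (h1 : OccursAt (U ++ U) F s1) (h2 : OccursAt (U ++ U) F s2)
    (hmp : minPeriod U = minPeriod F) : s1 % minPeriod F = s2 % minPeriod F := by
  rcases le_total s1 s2 with hle | hle
  · obtain ⟨c, hc⟩ := occ_cong_aux hU h1 h2 hmp hle
    have e : s2 = s1 + minPeriod F * c := by omega
    rw [e, Nat.add_mul_mod_self_left]
  · obtain ⟨c, hc⟩ := occ_cong_aux hU h2 h1 hmp hle
    have e : s1 = s2 + minPeriod F * c := by omega
    rw [e, Nat.add_mul_mod_self_left]

/-- Let `F` have smallest period `p`, `q ∈ [1, p]`, `q' ∈ [|F| - p + 1, |F|]`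
(1-indexed). The set of squares induced by `F` with an occurrence starting at `q`
equals the set of squares induced by `F` with an occurrence ending at `q'` if
`q ≡ q' + 1 (mod p)`, and the two sets are disjoint otherwise. -/
theorem stmt9 {α : Type*} (F : List α) (q q' : ℕ)
    (hper : 2 * minPeriod F ≤ F.length)
    (hq1 : 1 ≤ q) (hqp : q ≤ minPeriod F)
    (hq'1 : F.length + 1 ≤ q' + minPeriod F) (hq'2 : q' ≤ F.length) :
    if q % minPeriod F = (q' + 1) % minPeriod F then
      {U : List α | U ≠ [] ∧ minPeriod U = minPeriod F ∧
          OccursAt (U ++ U) F (q - 1)}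
        = {U : List α | U ≠ [] ∧ minPeriod U = minPeriod F ∧
            ∃ s, OccursAt (U ++ U) F s ∧ s + 2 * U.length = q'}
    else
      Disjoint
        {U : List α | U ≠ [] ∧ minPeriod U = minPeriod F ∧
          OccursAt (U ++ U) F (q - 1)}
        {U : List α | U ≠ [] ∧ minPeriod U = minPeriod F ∧
          ∃ s, OccursAt (U ++ U) F s ∧ s + 2 * U.length = q'} := by
  have hpF := minPeriod_isPeriod F
  set p := minPeriod F with hp
  have hp0 : 0 < p := hpF.1
  have hq1p : q - 1 < p := by omega
  split_ifs with hqq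
  · -- equality case
    have hmod : (q - 1) % p = q' % p := by
      have h0 : (q - 1 + 1) % p = (q' + 1) % p := by
        rw [show q - 1 + 1 = q from by omega]; exact hqq
      exact Nat.ModEq.add_right_cancel' 1 h0
    have hq'done : q' % p = q - 1 := by rw [← hmod, Nat.mod_eq_of_lt hq1p]
    ext U
    simp only [Set.mem_setOf_eq]
    constructor
    · rintro ⟨hU, hmp, hocc⟩
      refine ⟨hU, hmp, ?_⟩
      set L := U.length with hLdef
      have hL : 0 < L := List.length_pos_iff.2 hU
      obtain ⟨c, hc⟩ : p ∣ L := root_dvd hU hocc hmp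
      obtain ⟨M, hM⟩ : ∃ M, L + L = p * M := ⟨2 * c, by rw [hc]; ring⟩
      have hlenUU : (U ++ U).length = L + L := by simp [hLdef]
      have hb1 : q - 1 + (L + L) ≤ F.length := by
        have := hocc.2; rw [hlenUU] at this; omega
      obtain ⟨B, hB⟩ : ∃ B, q' = p * B + (q - 1) :=
        ⟨q' / p, by conv_lhs => rw [← Nat.div_add_mod q' p, hq'done]⟩
      -- L + L ≤ q'
      have h2L : L + L ≤ q' := by
        have hge : q + (L + L) ≤ q' + p := by omega
        have hMB : M ≤ B := by
          by_contra hcon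
          push_neg at hcon
          have h6 : p * (B + 1) ≤ p * M := Nat.mul_le_mul_left p hcon
          have h7 : p * (B + 1) = p * B + p := by ring
          omega
        have h8 : p * M ≤ p * B := Nat.mul_le_mul_left p hMB
        omega
      set s := q' - (L + L) with hs
      have hsum : s + (L + L) = q' := by omega
      refine ⟨s, ?_, by omega⟩
      have e1 : q' % p = s % p := by
        rw [← hsum, hM, Nat.add_mul_mod_self_left]
      refine occ_shift hpF hocc ?_ ?_
      · rw [Nat.mod_eq_of_lt hq1p, ← hq'done, e1]
      · rw [hlenUU]; omega
    · rintro ⟨hU, hmp, s, hocc, hsum⟩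
      refine ⟨hU, hmp, ?_⟩
      set L := U.length with hLdef
      have hL : 0 < L := List.length_pos_iff.2 hU
      obtain ⟨c, hc⟩ : p ∣ L := root_dvd hU hocc hmp
      obtain ⟨M, hM⟩ : ∃ M, L + L = p * M := ⟨2 * c, by rw [hc]; ring⟩
      have hlenUU : (U ++ U).length = L + L := by simp [hLdef]
      have hsum' : s + (L + L) = q' := by omega
      have e1 : s % p = q - 1 := by
        rw [← hq'done, ← hsum', hM, Nat.add_mul_mod_self_left]
      have hsge : q - 1 ≤ s := e1 ▸ Nat.mod_le s p
      refine occ_shift hpF hocc ?_ ?_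
      · rw [e1, Nat.mod_eq_of_lt hq1p]
      · rw [hlenUU]; omega
  · -- disjoint case
    rw [Set.disjoint_left]
    rintro U ⟨hU, hmp, hocc1⟩ ⟨-, -, s, hocc2, hsum⟩
    apply hqq
    set L := U.length with hLdef
    obtain ⟨c, hc⟩ : p ∣ L := root_dvd hU hocc2 hmp
    obtain ⟨M, hM⟩ : ∃ M, 2 * L = p * M := ⟨2 * c, by rw [hc]; ring⟩
    have hcong : (q - 1) % p = s % p := occ_cong hU hocc1 hocc2 hmp
    have e1 : s % p = q' % p := by
      rw [← hsum, hM, Nat.add_mul_mod_self_left]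
    have h2 : (q - 1) % p = q' % p := hcong.trans e1
    have h3 := Nat.ModEq.add_right 1 (h2 : Nat.ModEq p (q - 1) q')
    rw [show q - 1 + 1 = q from by omega] at h3
    exact h3
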